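/- Suppose positive integers x1,...,x8, y1,...,y8 satisfy the E8-frieze equations x1*y1 = x4+1, x2*y2 = x3+1, x3*y3 = x2+x4, x4*y4 = x1*x3+x5, x5*y5 = x4+x6, x6*y6 = x5+x7, x7*y7 = x6+x8, x8*y8 = x7+1. If x4 ≥ 2, y3 ≥ 2, y5 ≥ 2, y6 ≥ 2, and y7 ≥ 2, then xi ≤ x4 + 4 and yi ≤ x4 + 4 for all i ∈ {1,...,8}. -/
import Mathlib


lemma stmt13_aux (a b u v w : ℕ) (h : a * b = u * v + w)
    (hu : u ≤ a + 1) (hv : v ≤ a + 1) (hw : w ≤ a + 1) (ha : 2 ≤ a) : b ≤ a + 4 := by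
  by_contra hc
  push_neg at hc
  have h1 : u * v ≤ (a + 1) * (a + 1) := Nat.mul_le_mul hu hv
  have h2 : a * (a + 5) ≤ a * b := Nat.mul_le_mul_left a (by omega)
  nlinarith

theorem stmt13 (x1 x2 x3 x4 x5 x6 x7 x8 y1 y2 y3 y4 y5 y6 y7 y8 : ℕ)
    (hx : 0 < x1 ∧ 0 < x2 ∧ 0 < x3 ∧ 0 < x4 ∧ 0 < x5 ∧ 0 < x6 ∧ 0 < x7 ∧ 0 < x8)
    (hy : 0 < y1 ∧ 0 < y2 ∧ 0 < y3 ∧ 0 < y4 ∧ 0 < y5 ∧ 0 < y6 ∧ 0 < y7 ∧ 0 < y8)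
    (h1 : x1 * y1 = x4 + 1) (h2 : x2 * y2 = x3 + 1) (h3 : x3 * y3 = x2 + x4)
    (h4 : x4 * y4 = x1 * x3 + x5) (h5 : x5 * y5 = x4 + x6) (h6 : x6 * y6 = x5 + x7)
    (h7 : x7 * y7 = x6 + x8) (h8 : x8 * y8 = x7 + 1)
    (hx4 : 2 ≤ x4) (hy3 : 2 ≤ y3) (hy5 : 2 ≤ y5) (hy6 : 2 ≤ y6) (hy7 : 2 ≤ y7) :
    (x1 ≤ x4 + 4 ∧ x2 ≤ x4 + 4 ∧ x3 ≤ x4 + 4 ∧ x4 ≤ x4 + 4 ∧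
     x5 ≤ x4 + 4 ∧ x6 ≤ x4 + 4 ∧ x7 ≤ x4 + 4 ∧ x8 ≤ x4 + 4) ∧
    (y1 ≤ x4 + 4 ∧ y2 ≤ x4 + 4 ∧ y3 ≤ x4 + 4 ∧ y4 ≤ x4 + 4 ∧
     y5 ≤ x4 + 4 ∧ y6 ≤ x4 + 4 ∧ y7 ≤ x4 + 4 ∧ y8 ≤ x4 + 4) := by
  obtain ⟨px1, px2, px3, px4, px5, px6, px7, px8⟩ := hx
  obtain ⟨py1, py2, py3, py4, py5, py6, py7, py8⟩ := hy
  -- basic: a ≤ a*b when b ≥ 1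
  have l1 : x1 ≤ x1 * y1 := Nat.le_mul_of_pos_right _ py1
  have r1 : y1 ≤ x1 * y1 := Nat.le_mul_of_pos_left _ px1
  have l2 : x2 ≤ x2 * y2 := Nat.le_mul_of_pos_right _ py2
  have r2 : y2 ≤ x2 * y2 := Nat.le_mul_of_pos_left _ px2
  have l8 : x8 ≤ x8 * y8 := Nat.le_mul_of_pos_right _ py8
  have r8 : y8 ≤ x8 * y8 := Nat.le_mul_of_pos_left _ px8
  have hx2x3 : x2 ≤ x3 + 1 := h2 ▸ l2
  have h2y3 : 2 * x3 ≤ x2 + x4 := by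
    calc 2 * x3 ≤ y3 * x3 := Nat.mul_le_mul_right x3 hy3
    _ = x3 * y3 := Nat.mul_comm _ _
    _ = x2 + x4 := h3
  have hx3b : x3 ≤ x4 + 1 := by omega
  have hx2b : x2 ≤ x4 + 2 := by omega
  have hx1b : x1 ≤ x4 + 1 := h1 ▸ l1
  have hy1b : y1 ≤ x4 + 1 := h1 ▸ r1
  have hy2b : y2 ≤ x4 + 2 := by
    have := h2 ▸ r2; omega
  have hx8x7 : x8 ≤ x7 + 1 := h8 ▸ l8
  have hx7b : x7 ≤ x6 + 1 := by
    have : 2 * x7 ≤ x7 * y7 := by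
      calc 2 * x7 ≤ y7 * x7 := Nat.mul_le_mul_right x7 hy7
      _ = x7 * y7 := Nat.mul_comm _ _
    omega
  have hx6b : x6 ≤ x5 + 1 := by
    have : 2 * x6 ≤ x6 * y6 := by
      calc 2 * x6 ≤ y6 * x6 := Nat.mul_le_mul_right x6 hy6
      _ = x6 * y6 := Nat.mul_comm _ _
    omega
  have hx5b : x5 ≤ x4 + 1 := by
    have : 2 * x5 ≤ x5 * y5 := by
      calc 2 * x5 ≤ y5 * x5 := Nat.mul_le_mul_right x5 hy5
      _ = x5 * y5 := Nat.mul_comm _ _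
    omega
  have hx6c : x6 ≤ x4 + 2 := by omega
  have hx7c : x7 ≤ x4 + 3 := by omega
  have hx8c : x8 ≤ x4 + 4 := by omega
  have hy8b : y8 ≤ x4 + 4 := by
    have := h8 ▸ r8; omega
  have hy3b : y3 ≤ x4 + 2 := by
    rcases Nat.lt_or_ge x3 2 with h | h
    · have hx3 : x3 = 1 := by omega
      subst hx3; omega
    · have : 2 * y3 ≤ x3 * y3 := Nat.mul_le_mul_right y3 h
      omega
  have hy5b : y5 ≤ x4 + 2 := by
    rcases Nat.lt_or_ge x5 2 with h | h
    · have hx5 : x5 = 1 := by omega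
      subst hx5; omega
    · have : 2 * y5 ≤ x5 * y5 := Nat.mul_le_mul_right y5 h
      omega
  have hy6b : y6 ≤ x4 + 3 := by
    rcases Nat.lt_or_ge x6 2 with h | h
    · have hx6 : x6 = 1 := by omega
      subst hx6; omega
    · have : 2 * y6 ≤ x6 * y6 := Nat.mul_le_mul_right y6 h
      omega
  have hy7b : y7 ≤ x4 + 4 := by
    rcases Nat.lt_or_ge x7 2 with h | h
    · have hx7 : x7 = 1 := by omega
      subst hx7; omega
    · have : 2 * y7 ≤ x7 * y7 := Nat.mul_le_mul_right y7 h
      omega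
  have hy4b : y4 ≤ x4 + 4 := stmt13_aux x4 y4 x1 x3 x5 h4 hx1b hx3b hx5b hx4
  exact ⟨⟨by omega, by omega, by omega, by omega, by omega, by omega, by omega, hx8c⟩,
    ⟨by omega, by omega, by omega, hy4b, by omega, by omega, by omega, hy8b⟩⟩
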